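/- Let n ≥ 1 be an integer, γ ∈ (0,1), and s = n/2 + γ. A function U ∈ C²(ℝⁿ × (0,∞)) satisfies the degenerate elliptic equation div(y^{1−2γ}∇U) = 0, i.e. y^{1−2γ}(Δ_x U(x,y) + ∂²_y U(x,y)) + (1−2γ) y^{−2γ} ∂_y U(x,y) = 0 on ℝⁿ × (0,∞), if and only if the function u(x,y) := y^{n−s} U(x,y) satisfies the scattering equation −Δ_{g⁺}u − s(n−s)u = 0, i.e. y²(Δ_x u(x,y) + ∂²_y u(x,y)) − (n−1) y ∂_y u(x,y) + s(n−s) u(x,y) = 0 on ℝⁿ × (0,∞). -/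

import Mathlib

open Real Topology

noncomputable def lapX {n : ℕ} (u : EuclideanSpace ℝ (Fin n) → ℝ → ℝ)
    (x : EuclideanSpace ℝ (Fin n)) (y : ℝ) : ℝ :=
  ∑ i : Fin n, iteratedDeriv 2 (fun t : ℝ => u (x + t • EuclideanSpace.single i (1:ℝ)) y) 0

noncomputable def hypLap (n : ℕ) (u : EuclideanSpace ℝ (Fin n) → ℝ → ℝ)
    (x : EuclideanSpace ℝ (Fin n)) (y : ℝ) : ℝ :=
  y ^ 2 * (lapX u x y + iteratedDeriv 2 (u x) y) - ((n : ℝ) - 1) * y * deriv (u x) y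

lemma iter2_const_mul (c : ℝ) (h : ℝ → ℝ) (t : ℝ) :
    iteratedDeriv 2 (fun s => c * h s) t = c * iteratedDeriv 2 h t := by
  have h1 : deriv (fun s => c * h s) = fun s => c * deriv h s := by
    funext s; exact deriv_const_mul_field c
  simp only [show (2:ℕ) = 1 + 1 from rfl, iteratedDeriv_succ, iteratedDeriv_zero, h1]
  exact deriv_const_mul_field c

/-- `U` solves `div(y^{1-2γ} ∇U) = 0` on the upper half space iff
`u = y^{n-s} U` solves the scattering equation `-Δ_{g⁺} u - s(n-s) u = 0`. -/
theorem degenerate_extension_iff_scattering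
    (n : ℕ) (hn : 1 ≤ n) (γ : ℝ) (hγ : γ ∈ Set.Ioo (0:ℝ) 1)
    (s : ℝ) (hs : s = (n : ℝ) / 2 + γ)
    (U : EuclideanSpace ℝ (Fin n) → ℝ → ℝ)
    (hU : ContDiffOn ℝ 2 (fun p : EuclideanSpace ℝ (Fin n) × ℝ => U p.1 p.2)
      {p : EuclideanSpace ℝ (Fin n) × ℝ | 0 < p.2}) :
    (∀ x : EuclideanSpace ℝ (Fin n), ∀ y : ℝ, 0 < y →
      y ^ (1 - 2*γ) * (lapX U x y + iteratedDeriv 2 (U x) y)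
        + (1 - 2*γ) * y ^ (-(2*γ)) * deriv (U x) y = 0)
    ↔ (∀ x : EuclideanSpace ℝ (Fin n), ∀ y : ℝ, 0 < y →
      hypLap n (fun x' y' => y' ^ ((n : ℝ) - s) * U x' y') x y
        + s * ((n : ℝ) - s) * (y ^ ((n : ℝ) - s) * U x y) = 0) := by
  set a : ℝ := (n : ℝ) - s with ha
  suffices key : ∀ x : EuclideanSpace ℝ (Fin n), ∀ y : ℝ, 0 < y →
      ((y ^ (1 - 2*γ) * (lapX U x y + iteratedDeriv 2 (U x) y)
        + (1 - 2*γ) * y ^ (-(2*γ)) * deriv (U x) y = 0)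
      ↔ (hypLap n (fun x' y' => y' ^ a * U x' y') x y
        + s * a * (y ^ a * U x y) = 0)) by
    constructor
    · intro H x y hy; exact (key x y hy).mp (H x y hy)
    · intro H x y hy; exact (key x y hy).mpr (H x y hy)
  intro x y hy
  -- slice regularity in y
  have hf : ContDiffOn ℝ 2 (U x) (Set.Ioi (0:ℝ)) := by
    have hcomp : ContDiff ℝ 2 (fun t : ℝ => ((x, t) : EuclideanSpace ℝ (Fin n) × ℝ)) :=
      contDiff_const.prodMk contDiff_id
    exact hU.comp hcomp.contDiffOn (fun t ht => ht)
  set f : ℝ → ℝ := U x with hfdef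
  have hopen : Set.Ioi (0:ℝ) ∈ 𝓝 y := isOpen_Ioi.mem_nhds hy
  have hfd : ∀ t ∈ Set.Ioi (0:ℝ), HasDerivAt f (deriv f t) t := fun t ht =>
    ((hf.differentiableOn two_ne_zero).differentiableAt (isOpen_Ioi.mem_nhds ht)).hasDerivAt
  have hf1 : ContDiffOn ℝ 1 (deriv f) (Set.Ioi (0:ℝ)) :=
    hf.deriv_of_isOpen isOpen_Ioi le_rfl
  have hfd2 : HasDerivAt (deriv f) (deriv (deriv f) y) y :=
    ((hf1.differentiableOn one_ne_zero).differentiableAt hopen).hasDerivAt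
  set F := f y
  set D1 := deriv f y
  set D2 := deriv (deriv f) y
  set L := lapX U x y with hL
  -- g : the y-slice of u
  set g : ℝ → ℝ := fun y' => y' ^ a * U x y' with hgdef
  have hgd : ∀ t ∈ Set.Ioi (0:ℝ),
      HasDerivAt g (a * t ^ (a - 1) * f t + t ^ a * deriv f t) t := fun t ht =>
    (Real.hasDerivAt_rpow_const (Or.inl (ne_of_gt ht))).mul (hfd t ht)
  have hderivg : deriv g y = a * y ^ (a - 1) * F + y ^ a * D1 := (hgd y hy).deriv
  have hgev : deriv g =ᶠ[𝓝 y] fun t => a * t ^ (a - 1) * f t + t ^ a * deriv f t :=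
    Filter.eventuallyEq_of_mem hopen (fun t ht => (hgd t ht).deriv)
  have h1 : HasDerivAt (fun t : ℝ => a * t ^ (a - 1)) (a * ((a - 1) * y ^ (a - 1 - 1))) y :=
    (Real.hasDerivAt_rpow_const (Or.inl (ne_of_gt hy))).const_mul a
  have h4 : HasDerivAt (fun t => a * t ^ (a - 1) * f t + t ^ a * deriv f t)
      ((a * ((a - 1) * y ^ (a - 1 - 1)) * F + a * y ^ (a - 1) * D1)
        + (a * y ^ (a - 1) * D1 + y ^ a * D2)) y :=
    (h1.mul (hfd y hy)).add ((Real.hasDerivAt_rpow_const (Or.inl (ne_of_gt hy))).mul hfd2)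
  have hg2 : iteratedDeriv 2 g y
      = (a * ((a - 1) * y ^ (a - 1 - 1)) * F + a * y ^ (a - 1) * D1)
        + (a * y ^ (a - 1) * D1 + y ^ a * D2) := by
    rw [show (2:ℕ) = 1 + 1 from rfl, iteratedDeriv_succ, iteratedDeriv_one, hgev.deriv_eq]
    exact h4.deriv
  have hf2 : iteratedDeriv 2 f y = D2 := by
    rw [show (2:ℕ) = 1 + 1 from rfl, iteratedDeriv_succ, iteratedDeriv_one]
  -- lapX of u
  have hlap : lapX (fun x' y' => y' ^ a * U x' y') x y = y ^ a * L := by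
    rw [hL]
    unfold lapX
    rw [Finset.mul_sum]
    exact Finset.sum_congr rfl fun i _ => iter2_const_mul (y ^ a) _ 0
  -- rpow arithmetic
  have hpos : (0:ℝ) < y ^ (-(2*γ)) := Real.rpow_pos_of_pos hy _
  have hpos2 : (0:ℝ) < y ^ (a + 1) := Real.rpow_pos_of_pos hy _
  have e1 : y ^ (1 - 2*γ) = y ^ (-(2*γ)) * y := by
    rw [show 1 - 2*γ = -(2*γ) + 1 by ring, Real.rpow_add hy, Real.rpow_one]
  have e2 : y ^ (a - 1) = y ^ (a - 1 - 1) * y := by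
    have h := Real.rpow_add hy (a - 1 - 1) 1
    rw [Real.rpow_one] at h
    convert h using 2
    ring
  have e3 : y ^ a = y ^ (a - 1 - 1) * y ^ 2 := by
    have h := Real.rpow_add hy (a - 1 - 1) ((2:ℕ):ℝ)
    rw [Real.rpow_natCast] at h
    convert h using 2
    push_cast; ring
  have e4 : y ^ (a + 1) = y ^ (a - 1 - 1) * y ^ 3 := by
    have h := Real.rpow_add hy (a - 1 - 1) ((3:ℕ):ℝ)
    rw [Real.rpow_natCast] at h
    convert h using 2
    push_cast; ring
  -- the common factor
  set E : ℝ := y * (L + D2) + ((n:ℝ) + 1 - 2*s) * D1 with hE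
  have hdeg : y ^ (1 - 2*γ) * (lapX U x y + iteratedDeriv 2 (U x) y)
      + (1 - 2*γ) * y ^ (-(2*γ)) * deriv (U x) y = y ^ (-(2*γ)) * E := by
    rw [← hfdef, hf2, ← hL, e1, hE, show (n:ℝ) + 1 - 2*s = 1 - 2*γ by rw [hs]; push_cast; ring]
    ring
  have hscat : hypLap n (fun x' y' => y' ^ a * U x' y') x y + s * a * (y ^ a * U x y)
      = y ^ (a + 1) * E := by
    unfold hypLap
    have hgx : (fun x' y' => y' ^ a * U x' y') x = g := rfl
    rw [hlap, hgx, hg2, hderivg, e2, e3, e4, hE, ha, ← hfdef]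
    ring
  rw [hdeg, hscat]
  constructor
  · intro h
    have : E = 0 := by
      rcases mul_eq_zero.mp h with h' | h'
      · exact absurd h' hpos.ne'
      · exact h'
    rw [this, mul_zero]
  · intro h
    have : E = 0 := by
      rcases mul_eq_zero.mp h with h' | h'
      · exact absurd h' hpos2.ne'
      · exact h'
    rw [this, mul_zero]
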